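/- (Disjoint locally greedy (k+1)-approximation) Under agent anonymity, for any ordering of player turns, the locally greedy algorithm with disjointness produces an allocation (I₁,...,I_k) with w(O₁,...,O_k) ≤ (k+1)·w(I₁,...,I_k) for every valid disjoint allocation (O₁,...,O_k) with |Oᵢ| = |Iᵢ|, given the decomposition: w(O) ≤ w(O⁰) + (k-1)·w(I) where Oᵢ⁰ = Oᵢ \ ⋃_{j≠i} I_j, combined with w(O⁰) ≤ 2·w(I). -/

import Mathlib

section Aux
variable {U : Type*} [Fintype U] [DecidableEq U] {k : ℕ}
variable (w : (Fin k → Finset U) → ℝ)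

/-- DR-submodularity extended to adding a whole tuple `C`. -/
lemma lemA
    (hsub : ∀ A B : Fin k → Finset U, (∀ i, A i ⊆ B i) → ∀ (i : Fin k) (e : U),
      w (Function.update B i (insert e (B i))) - w B ≤
      w (Function.update A i (insert e (A i))) - w A) :
    ∀ (n : ℕ) (C A B : Fin k → Finset U), (∑ i, (C i).card) = n → (∀ i, A i ⊆ B i) →
      w (fun i => B i ∪ C i) - w B ≤ w (fun i => A i ∪ C i) - w A := by
  intro n
  induction n with
  | zero =>
    intro C A B hC hAB
    have hCe : ∀ i, C i = ∅ := by
      intro i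
      have := Finset.sum_eq_zero_iff.mp hC i (Finset.mem_univ i)
      simpa [Finset.card_eq_zero] using this
    simp only [hCe, Finset.union_empty]
    simp
  | succ n ih =>
    intro C A B hC hAB
    have hpos : ∃ i, (C i).Nonempty := by
      by_contra h
      push_neg at h
      simp [h] at hC
    obtain ⟨i₀, e, he⟩ := hpos
    set C' : Fin k → Finset U := Function.update C i₀ ((C i₀).erase e) with hC'
    have hsum' : ∑ i, (C' i).card = n := by
      have h1 : ∑ i, (C' i).card
          = ((C i₀).erase e).card + ∑ i ∈ Finset.univ.erase i₀, (C i).card := by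
        rw [hC']
        rw [← Finset.add_sum_erase _ _ (Finset.mem_univ i₀)]
        simp only [Function.update_self]
        congr 1
        exact Finset.sum_congr rfl fun i hi =>
          by rw [Function.update_of_ne (Finset.ne_of_mem_erase hi)]
      have h2 : (C i₀).card + ∑ i ∈ Finset.univ.erase i₀, (C i).card = n + 1 := by
        rw [Finset.add_sum_erase Finset.univ (fun i => (C i).card) (Finset.mem_univ i₀)]
        exact hC
      have h3 : 1 ≤ (C i₀).card := Finset.card_pos.mpr ⟨e, he⟩
      rw [h1, Finset.card_erase_of_mem he]; omega
    have hjoin : ∀ X : Fin k → Finset U,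
        (fun i => X i ∪ C i)
          = Function.update (fun i => X i ∪ C' i) i₀ (insert e (X i₀ ∪ C' i₀)) := by
      intro X
      funext i
      by_cases hi : i = i₀
      · subst hi
        simp only [Function.update_self, hC']
        ext x
        simp only [Finset.mem_union, Finset.mem_insert, Finset.mem_erase]
        by_cases hx : x = e
        · simp [hx, he]
        · simp [hx]
      · rw [Function.update_of_ne hi, hC', Function.update_of_ne hi]
    have hAB' : ∀ i, (fun i => A i ∪ C' i) i ⊆ (fun i => B i ∪ C' i) i :=
      fun i => Finset.union_subset_union_left (hAB i)
    have h1 := hsub (fun i => A i ∪ C' i) (fun i => B i ∪ C' i) hAB' i₀ e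
    have h2 := ih C' A B hsum' hAB
    rw [← hjoin A, ← hjoin B] at h1
    linarith

set_option linter.unusedSectionVars false

/-- Subadditivity of `w` over pointwise unions of allocations. -/
lemma lemSubadd
    (hempty : w (fun _ => ∅) = 0)
    (hsub : ∀ A B : Fin k → Finset U, (∀ i, A i ⊆ B i) → ∀ (i : Fin k) (e : U),
      w (Function.update B i (insert e (B i))) - w B ≤
      w (Function.update A i (insert e (A i))) - w A)
    (A C : Fin k → Finset U) :
    w (fun i => A i ∪ C i) ≤ w A + w C := by
  have h := lemA w hsub (∑ i, (C i).card) C (fun _ => ∅) A rfl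
    (fun i => Finset.empty_subset _)
  simp only [Finset.empty_union, hempty] at h
  have : w (fun i => C i) = w C := rfl
  linarith [h]

/-- Subadditivity over a finite sup of allocations. -/
lemma lemSup
    (hempty : w (fun _ => ∅) = 0)
    (hsub : ∀ A B : Fin k → Finset U, (∀ i, A i ⊆ B i) → ∀ (i : Fin k) (e : U),
      w (Function.update B i (insert e (B i))) - w B ≤
      w (Function.update A i (insert e (A i))) - w A)
    (Q : Fin k → Fin k → Finset U) :
    ∀ T : Finset (Fin k),
      w (fun i => T.sup (fun s => Q s i)) ≤ ∑ s ∈ T, w (Q s) := by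
  intro T
  induction T using Finset.cons_induction with
  | empty => simp only [Finset.sup_empty, Finset.sum_empty]; simp [hempty]
  | cons a T ha ih =>
    have hsup : (fun i => (Finset.cons a T ha).sup (fun s => Q s i))
        = fun i => Q a i ∪ T.sup (fun s => Q s i) := by
      funext i; rw [Finset.sup_cons, Finset.sup_eq_union]
    rw [hsup, Finset.sum_cons]
    calc w (fun i => Q a i ∪ T.sup (fun s => Q s i))
        ≤ w (Q a) + w (fun i => T.sup (fun s => Q s i)) :=
          lemSubadd w hempty hsub _ _
      _ ≤ w (Q a) + ∑ s ∈ T, w (Q s) := by linarith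

/-- Marginal decomposition: adding `C` to `B` gains at most the sum of single-element
marginals relative to `B`. -/
lemma lemB
    (hsub : ∀ A B : Fin k → Finset U, (∀ i, A i ⊆ B i) → ∀ (i : Fin k) (e : U),
      w (Function.update B i (insert e (B i))) - w B ≤
      w (Function.update A i (insert e (A i))) - w A) :
    ∀ (n : ℕ) (C B : Fin k → Finset U), (∑ i, (C i \ B i).card) = n →
      w (fun i => B i ∪ C i) - w B ≤
        ∑ i, ∑ e ∈ C i \ B i, (w (Function.update B i (insert e (B i))) - w B) := by
  intro n
  induction n with
  | zero =>
    intro C B hC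
    have hCe : ∀ i, C i \ B i = ∅ := by
      intro i
      have := Finset.sum_eq_zero_iff.mp hC i (Finset.mem_univ i)
      simpa [Finset.card_eq_zero] using this
    have hBC : (fun i => B i ∪ C i) = B := by
      funext i
      have : C i ⊆ B i := by
        intro x hx
        by_contra hxB
        have : x ∈ C i \ B i := Finset.mem_sdiff.mpr ⟨hx, hxB⟩
        simp [hCe i] at this
      rw [Finset.union_eq_left.mpr this]
    simp [hBC, hCe]
  | succ n ih =>
    intro C B hC
    have hpos : ∃ i, (C i \ B i).Nonempty := by
      by_contra h
      push_neg at h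
      simp [h] at hC
    obtain ⟨i₀, e, he⟩ := hpos
    have heC : e ∈ C i₀ := (Finset.mem_sdiff.mp he).1
    have heB : e ∉ B i₀ := (Finset.mem_sdiff.mp he).2
    set C' : Fin k → Finset U := Function.update C i₀ ((C i₀).erase e) with hC'
    have hCdiff : ∀ i, C' i \ B i = if i = i₀ then (C i₀ \ B i₀).erase e else C i \ B i := by
      intro i
      by_cases hi : i = i₀
      · subst hi
        rw [if_pos rfl, hC', Function.update_self, Finset.erase_sdiff_comm]
      · rw [if_neg hi, hC', Function.update_of_ne hi]
    have hsum' : ∑ i, (C' i \ B i).card = n := by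
      have h1 : ∑ i, (C' i \ B i).card
          = ((C i₀ \ B i₀).erase e).card + ∑ i ∈ Finset.univ.erase i₀, (C i \ B i).card := by
        rw [← Finset.add_sum_erase Finset.univ (fun i => (C' i \ B i).card)
          (Finset.mem_univ i₀)]
        rw [hCdiff i₀, if_pos rfl]
        congr 1
        refine Finset.sum_congr rfl fun i hi => ?_
        rw [hCdiff i, if_neg (Finset.ne_of_mem_erase hi)]
      have h2 : (C i₀ \ B i₀).card + ∑ i ∈ Finset.univ.erase i₀, (C i \ B i).card = n + 1 := by
        rw [Finset.add_sum_erase Finset.univ (fun i => (C i \ B i).card) (Finset.mem_univ i₀)]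
        exact hC
      have h3 : 1 ≤ (C i₀ \ B i₀).card := Finset.card_pos.mpr ⟨e, he⟩
      rw [h1, Finset.card_erase_of_mem he]; omega
    have hjoin : (fun i => B i ∪ C i)
        = Function.update (fun i => B i ∪ C' i) i₀ (insert e (B i₀ ∪ C' i₀)) := by
      funext i
      by_cases hi : i = i₀
      · subst hi
        simp only [Function.update_self, hC']
        ext x
        simp only [Finset.mem_union, Finset.mem_insert, Finset.mem_erase]
        by_cases hx : x = e
        · simp [hx, heC]
        · simp [hx]
      · rw [Function.update_of_ne hi, hC', Function.update_of_ne hi]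
    have hBle : ∀ i, B i ⊆ (fun i => B i ∪ C' i) i := fun i => Finset.subset_union_left
    have h1 := hsub B (fun i => B i ∪ C' i) hBle i₀ e
    rw [← hjoin] at h1
    have h2 := ih C' B hsum'
    -- sum bookkeeping
    set g : Fin k → U → ℝ := fun i e' => w (Function.update B i (insert e' (B i))) - w B
      with hg
    have hsums : ∑ i, ∑ e' ∈ C i \ B i, g i e'
        = (∑ i, ∑ e' ∈ C' i \ B i, g i e') + g i₀ e := by
      rw [← Finset.add_sum_erase Finset.univ (fun i => ∑ e' ∈ C i \ B i, g i e')
        (Finset.mem_univ i₀),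
        ← Finset.add_sum_erase Finset.univ (fun i => ∑ e' ∈ C' i \ B i, g i e')
        (Finset.mem_univ i₀)]
      have hrest : ∑ i ∈ Finset.univ.erase i₀, ∑ e' ∈ C' i \ B i, g i e'
          = ∑ i ∈ Finset.univ.erase i₀, ∑ e' ∈ C i \ B i, g i e' := by
        refine Finset.sum_congr rfl fun i hi => ?_
        rw [hCdiff i, if_neg (Finset.ne_of_mem_erase hi)]
      rw [hrest, hCdiff i₀, if_pos rfl,
        ← Finset.add_sum_erase (C i₀ \ B i₀) (g i₀) he]
      ring
    rw [hsums]
    have hfin : w (fun i => B i ∪ C i) - w (fun i => B i ∪ C' i) ≤ g i₀ e := h1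
    linarith

end Aux

set_option maxHeartbeats 1600000 in


set_option maxHeartbeats 1600000 in
/-- Disjoint locally greedy (k+1)-approximation: Under agent anonymity
(the welfare `w` is symmetric under permutations of the players), for any ordering of
player turns, the locally greedy algorithm with disjointness (each step adds to the
designated player's set the best element not yet allocated to anyone) produces an
allocation `(I₁,…,I_k) = S N` such that `w(O₁,…,O_k) ≤ (k+1)·w(I₁,…,I_k)` for every
valid disjoint allocation `(O₁,…,O_k)` with `|Oᵢ| = |Iᵢ|`. -/
theorem stmt17 {U : Type*} [Fintype U] [DecidableEq U] {k : ℕ}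
    (w : (Fin k → Finset U) → ℝ)
    (hnonneg : ∀ A, 0 ≤ w A)
    (hempty : w (fun _ => ∅) = 0)
    (hmono : ∀ A B : Fin k → Finset U, (∀ i, A i ⊆ B i) → w A ≤ w B)
    (hsub : ∀ A B : Fin k → Finset U, (∀ i, A i ⊆ B i) → ∀ (i : Fin k) (e : U),
      w (Function.update B i (insert e (B i))) - w B ≤
      w (Function.update A i (insert e (A i))) - w A)
    -- anonymity: welfare is invariant under permuting the players
    (hanon : ∀ (σ : Equiv.Perm (Fin k)) (A : Fin k → Finset U), w (A ∘ σ) = w A)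
    (N : ℕ) (π : ℕ → Fin k)
    (S : ℕ → Fin k → Finset U)
    (hS0 : S 0 = fun _ => ∅)
    (hstep : ∀ j < N, ∃ c : U, (∀ i, c ∉ S j i) ∧
      S (j + 1) = Function.update (S j) (π j) (insert c (S j (π j))) ∧
      ∀ e : U, (∀ i, e ∉ S j i) →
        w (Function.update (S j) (π j) (insert e (S j (π j)))) - w (S j) ≤
        w (S (j + 1)) - w (S j))
    (O : Fin k → Finset U)
    (hOdisj : ∀ i j : Fin k, i ≠ j → Disjoint (O i) (O j))
    (hOcard : ∀ i, (O i).card = (S N i).card) :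
    w O ≤ (k + 1 : ℝ) * w (S N) := by
  -- trivial case k = 0
  rcases Nat.eq_zero_or_pos k with hk0 | hk
  · subst hk0
    have hOS : O = S N := funext fun i => i.elim0
    rw [hOS]
    have := hnonneg (S N)
    push_cast
    linarith
  haveI : NeZero k := ⟨hk.ne'⟩
  set I : Fin k → Finset U := S N with hI
  -- basic greedy facts
  have hstep1 : ∀ j < N, ∀ i, S j i ⊆ S (j + 1) i := by
    intro j hj i
    obtain ⟨c, hc, hEq, -⟩ := hstep j hj
    rw [hEq]
    by_cases hi : i = π j
    · subst hi
      rw [Function.update_self]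
      exact Finset.subset_insert _ _
    · rw [Function.update_of_ne hi]
  have hSmono : ∀ j j' : ℕ, j ≤ j' → j' ≤ N → ∀ i, S j i ⊆ S j' i := by
    intro j j' hle
    induction j', hle using Nat.le_induction with
    | base => intro _ i; exact subset_rfl
    | succ m hm ih =>
      intro hmN i
      exact (ih (Nat.le_of_succ_le hmN) i).trans (hstep1 m hmN i)
  have hdelta_nonneg : ∀ j < N, 0 ≤ w (S (j + 1)) - w (S j) := by
    intro j hj
    have := hmono (S j) (S (j + 1)) (hstep1 j hj)
    linarith
  -- cardinality of greedy sets equals number of corresponding steps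
  have hcard : ∀ m, m ≤ N → ∀ p,
      (S m p).card = ((Finset.range m).filter (fun j => π j = p)).card := by
    intro m
    induction m with
    | zero => intro _ p; simp [hS0]
    | succ m ih =>
      intro hm p
      have hmN : m < N := hm
      obtain ⟨c, hc, hEq, -⟩ := hstep m hmN
      rw [hEq, Finset.range_add_one, Finset.filter_insert]
      by_cases hp : π m = p
      · rw [if_pos hp, ← hp, Function.update_self,
          Finset.card_insert_of_notMem (hc (π m)),
          Finset.card_insert_of_notMem (by simp), hp]
        rw [ih (Nat.le_of_lt hmN) p]
      · rw [if_neg hp, Function.update_of_ne (fun h => hp h.symm)]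
        exact ih (Nat.le_of_lt hmN) p
  -- telescoping
  have htel : ∑ j ∈ Finset.range N, (w (S (j + 1)) - w (S j)) = w I := by
    rw [Finset.sum_range_sub (fun j => w (S j)), hS0, hempty, ← hI, sub_zero]
  -- O⁰ : available part of O
  set O0 : Fin k → Finset U :=
    fun i => (O i).filter (fun e => ∀ j, j ≠ i → e ∉ I j) with hO0
  -- ===== Step 2 : w O0 ≤ 2 * w I =====
  have hstep2 : w O0 ≤ 2 * w I := by
    -- bound sum of marginals by greedy increments
    have hkey : ∑ i, ∑ e ∈ O0 i \ I i,
        (w (Function.update I i (insert e (I i))) - w I)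
        ≤ w I := by
      have hsum_steps : ∀ p : Fin k,
          ∑ e ∈ O0 p \ I p, (w (Function.update I p (insert e (I p))) - w I)
          ≤ ∑ j ∈ (Finset.range N).filter (fun j => π j = p),
              (w (S (j + 1)) - w (S j)) := by
        intro p
        set D := O0 p \ I p with hD
        set steps := (Finset.range N).filter (fun j => π j = p) with hsteps
        have hcardle : D.card ≤ steps.card := by
          have h1 : D ⊆ O p := (Finset.sdiff_subset).trans (Finset.filter_subset _ _)
          calc D.card ≤ (O p).card := Finset.card_le_card h1
            _ = (I p).card := hOcard p
            _ = steps.card := hcard N le_rfl p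
        obtain ⟨t, hts, htc⟩ := Finset.exists_subset_card_eq hcardle
        have hDt : D.card = t.card := htc.symm
        let eqv : {x // x ∈ D} ≃ {x // x ∈ t} := Finset.equivOfCardEq hDt
        set f : U → ℕ := fun x => if hx : x ∈ D then (eqv ⟨x, hx⟩ : ℕ) else 0 with hf
        have hfmem : ∀ x ∈ D, f x ∈ steps := by
          intro x hx
          rw [hf]; simp only [dif_pos hx]
          exact hts (eqv ⟨x, hx⟩).2
        have hfinj : ∀ x ∈ D, ∀ y ∈ D, f x = f y → x = y := by
          intro x hx y hy hxy
          rw [hf] at hxy; simp only [dif_pos hx, dif_pos hy] at hxy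
          have := eqv.injective (Subtype.ext hxy)
          exact congrArg Subtype.val this
        -- per-element bound
        have hper : ∀ x ∈ D,
            w (Function.update I p (insert x (I p))) - w I
            ≤ w (S (f x + 1)) - w (S (f x)) := by
          intro x hx
          have hfx := hfmem x hx
          rw [hsteps, Finset.mem_filter, Finset.mem_range] at hfx
          obtain ⟨hfxN, hfxp⟩ := hfx
          obtain ⟨c, hc, hEq, hopt⟩ := hstep (f x) hfxN
          have hxO0 : x ∈ O0 p := (Finset.mem_sdiff.mp hx).1
          have hxnI : x ∉ I p := (Finset.mem_sdiff.mp hx).2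
          have havail : ∀ i, x ∉ S (f x) i := by
            intro i
            by_cases hip : i = p
            · subst hip
              exact fun hmem => hxnI (hSmono (f x) N (Nat.le_of_lt hfxN) le_rfl i hmem)
            · have := (Finset.mem_filter.mp hxO0).2 i hip
              exact fun hmem => this (hSmono (f x) N (Nat.le_of_lt hfxN) le_rfl i hmem)
          have h1 := hopt x havail
          rw [hfxp] at h1
          have h2 := hsub (S (f x)) I
            (fun i => hSmono (f x) N (Nat.le_of_lt hfxN) le_rfl i) p x
          linarith
        calc ∑ e ∈ D, (w (Function.update I p (insert e (I p))) - w I)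
            ≤ ∑ e ∈ D, (w (S (f e + 1)) - w (S (f e))) :=
              Finset.sum_le_sum hper
          _ = ∑ j ∈ D.image f, (w (S (j + 1)) - w (S j)) := by
              rw [Finset.sum_image hfinj]
          _ ≤ ∑ j ∈ steps, (w (S (j + 1)) - w (S j)) := by
              refine Finset.sum_le_sum_of_subset_of_nonneg ?_ ?_
              · intro j hj
                obtain ⟨x, hx, rfl⟩ := Finset.mem_image.mp hj
                exact hfmem x hx
              · intro j hj _
                rw [hsteps, Finset.mem_filter, Finset.mem_range] at hj
                exact hdelta_nonneg j hj.1
      calc ∑ i, ∑ e ∈ O0 i \ I i,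
            (w (Function.update I i (insert e (I i))) - w I)
          ≤ ∑ p, ∑ j ∈ (Finset.range N).filter (fun j => π j = p),
              (w (S (j + 1)) - w (S j)) := Finset.sum_le_sum fun p _ => hsum_steps p
        _ = ∑ j ∈ Finset.range N, (w (S (j + 1)) - w (S j)) :=
            Finset.sum_fiberwise_of_maps_to (fun j _ => Finset.mem_univ (π j)) _
        _ = w I := htel
    have hB := lemB w hsub (∑ i, (O0 i \ I i).card) O0 I rfl
    have hm : w O0 ≤ w (fun i => I i ∪ O0 i) :=
      hmono _ _ (fun i => Finset.subset_union_right)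
    linarith
  -- ===== Step 1 : decomposition =====
  set Q : Fin k → Fin k → Finset U :=
    fun s i => if s = 0 then O0 i else O i ∩ I (i + s) with hQ
  have hQO : ∀ i, (Finset.univ.sup fun s => Q s i) = O i := by
    intro i
    ext e
    rw [Finset.mem_sup]
    constructor
    · rintro ⟨s, -, hs⟩
      simp only [hQ] at hs
      by_cases h0 : s = 0
      · rw [if_pos h0] at hs; exact (Finset.mem_filter.mp hs).1
      · rw [if_neg h0] at hs; exact (Finset.mem_inter.mp hs).1
    · intro he
      by_cases h : ∀ j, j ≠ i → e ∉ I j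
      · refine ⟨0, Finset.mem_univ _, ?_⟩
        simp only [hQ, if_pos rfl]
        exact Finset.mem_filter.mpr ⟨he, h⟩
      · push_neg at h
        obtain ⟨j, hji, hej⟩ := h
        refine ⟨j - i, Finset.mem_univ _, ?_⟩
        have hs0 : j - i ≠ 0 := fun hc => hji (sub_eq_zero.mp hc)
        simp only [hQ, if_neg hs0]
        have hij : i + (j - i) = j := by abel
        rw [hij]
        exact Finset.mem_inter.mpr ⟨he, hej⟩
  have hwOQ : w O ≤ ∑ s, w (Q s) := by
    have := lemSup w hempty hsub Q Finset.univ
    have hOeq : (fun i => Finset.univ.sup fun s => Q s i) = O := funext hQO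
    rw [hOeq] at this
    exact this
  have hQ0 : Q 0 = O0 := by
    funext i; simp only [hQ, if_pos rfl]
  have hQs : ∀ s : Fin k, s ≠ 0 → w (Q s) ≤ w I := by
    intro s hs
    have h1 : w (Q s) ≤ w (fun i => I (i + s)) := by
      apply hmono
      intro i
      simp only [hQ, if_neg hs]
      exact Finset.inter_subset_right
    have h2 : w (fun i => I (i + s)) = w I := by
      have := hanon (Equiv.addRight s) I
      have hc : (I ∘ (Equiv.addRight s)) = fun i => I (i + s) := rfl
      rw [hc] at this
      exact this
    linarith
  have hsplit : ∑ s, w (Q s) = w (Q 0) + ∑ s ∈ Finset.univ.erase 0, w (Q s) :=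
    (Finset.add_sum_erase Finset.univ (fun s => w (Q s)) (Finset.mem_univ 0)).symm
  have hrest : ∑ s ∈ Finset.univ.erase 0, w (Q s) ≤ ((k - 1 : ℕ) : ℝ) * w I := by
    have hcard' : (Finset.univ.erase (0 : Fin k)).card = k - 1 := by
      rw [Finset.card_erase_of_mem (Finset.mem_univ _), Finset.card_univ,
        Fintype.card_fin]
    calc ∑ s ∈ Finset.univ.erase 0, w (Q s)
        ≤ (Finset.univ.erase (0 : Fin k)).card • w I :=
          Finset.sum_le_card_nsmul _ _ _ (fun s hs => hQs s (Finset.ne_of_mem_erase hs))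
      _ = ((k - 1 : ℕ) : ℝ) * w I := by rw [hcard', nsmul_eq_mul]
  have hcast : ((k - 1 : ℕ) : ℝ) = (k : ℝ) - 1 := by
    have : (1 : ℕ) ≤ k := hk
    push_cast [Nat.cast_sub this]
    ring
  rw [hQ0] at hsplit
  have : w O ≤ w O0 + ((k : ℝ) - 1) * w I := by
    rw [← hcast]
    linarith
  linarith
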